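/- In the credit protocol, a node cannot have a positive current credit counter while its data queue is empty: in every reachable state of the protocol, if the current credit counter c > 0 then the data queue Q is nonempty. -/
import Mathlib


/-- State of the credit protocol: `Q` = number of queued data items,
`S` = queue of signal credits, `c` = receiver's credit counter,
`k` = data items emitted since the sender's last signal. -/
structure PState where
  Q : ℕ
  S : List ℕ
  c : ℕ
  k : ℕ

/-- Transitions of the credit protocol. -/
inductive PStep : PState → PState → Prop
  | emitData (Q : ℕ) (S : List ℕ) (c k : ℕ) :
      PStep ⟨Q, S, c, k⟩ ⟨Q + 1, S, c, k + 1⟩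
  | emitSignalEmpty (Q c k : ℕ) :
      PStep ⟨Q, [], c, k⟩ ⟨Q, [Q], c, 0⟩
  | emitSignalNonempty (Q : ℕ) (S : List ℕ) (c k : ℕ) (h : S ≠ []) :
      PStep ⟨Q, S, c, k⟩ ⟨Q, S ++ [k], c, 0⟩
  | consumeData (Q : ℕ) (S : List ℕ) (c k : ℕ) (hQ : 0 < Q)
      (h : S = [] ∨ 0 < c) :
      PStep ⟨Q, S, c, k⟩ ⟨Q - 1, S, if S = [] then c else c - 1, k⟩
  | transfer (Q h : ℕ) (S' : List ℕ) (k : ℕ) (hc : 0 < h) :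
      PStep ⟨Q, h :: S', 0, k⟩ ⟨Q, 0 :: S', h, k⟩
  | consumeSignal (Q : ℕ) (S' : List ℕ) (k : ℕ) :
      PStep ⟨Q, 0 :: S', 0, k⟩ ⟨Q, S', 0, k⟩

/-- The initial state: empty queues, zero counters. -/
def initP : PState := ⟨0, [], 0, 0⟩

def PInv (s : PState) : Prop :=
  (s.S = [] → s.c = 0) ∧ (s.S ≠ [] → s.c + s.S.sum + s.k ≤ s.Q)

lemma PInv_init : PInv initP := by
  constructor <;> simp [initP, PInv]

lemma PInv_step {s t : PState} (h : PStep s t) (hi : PInv s) : PInv t := by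
  obtain ⟨h1, h2⟩ := hi
  cases h with
  | emitData Q S c k =>
      refine ⟨h1, fun hS => ?_⟩
      have := h2 hS
      simp only at *
      omega
  | emitSignalEmpty Q c k =>
      have hc : c = 0 := h1 rfl
      refine ⟨by simp, fun _ => by simp [hc]⟩
  | emitSignalNonempty Q S c k hS =>
      have := h2 hS
      refine ⟨by simp, fun _ => by simp only [List.sum_append, List.sum_cons, List.sum_nil] at *; omega⟩
  | consumeData Q S c k hQ hcase =>
      by_cases hS : S = []
      · subst hS
        exact ⟨fun _ => by simpa using h1 rfl, fun h => by simp at h⟩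
      · have := h2 hS
        simp only [if_neg hS]
        refine ⟨fun h => absurd h hS, fun _ => ?_⟩
        rcases hcase with h' | hc
        · exact absurd h' hS
        · dsimp only at *
          omega
  | transfer Q hd S' k hc =>
      have := h2 (by simp)
      refine ⟨by simp, fun _ => ?_⟩
      dsimp only at *
      simp only [List.sum_cons] at *
      omega
  | consumeSignal Q S' k =>
      have := h2 (by simp)
      dsimp only at this
      simp only [List.sum_cons] at this
      refine ⟨fun _ => rfl, fun _ => by dsimp only; omega⟩

lemma PInv_reach {s : PState} (h : Relation.ReflTransGen PStep initP s) : PInv s := by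
  induction h with
  | refl => exact PInv_init
  | tail _ hstep ih => exact PInv_step hstep ih

/-- in every reachable state of the credit protocol, a positive
current credit counter implies that the data queue is nonempty. -/
theorem credit_implies_data (s : PState)
    (hreach : Relation.ReflTransGen PStep initP s) (hc : 0 < s.c) :
    0 < s.Q := by
  obtain ⟨h1, h2⟩ := PInv_reach hreach
  by_cases hS : s.S = []
  · exact absurd (h1 hS) (by omega)
  · have := h2 hS
    omega
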